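/- For the function δ(ε) defined by δ = 1 if ε ≤ 1/3 and δ = (1-2ε)²/ε² if ε ≥ 1/3, and ε' defined by ε' = 1/2 - (1/2)√((1-3ε)/(1+ε)) if ε ≤ 1/3 and ε' = 1/2 if ε ≥ 1/3, it holds for all ε ∈ (0, 1/2) that ε < ε' ≤ 1/2. -/
import Mathlib


/-- The cutting probability `δ(ε)` of the adversary. -/
noncomputable def cutDelta (ε : ℝ) : ℝ :=
  if ε ≤ 1 / 3 then 1 else (1 - 2 * ε) ^ 2 / ε ^ 2

/-- The effective noise `ε'(ε)` on the two edges incident to a marked (uncut) node. -/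
noncomputable def epsPrime (ε : ℝ) : ℝ :=
  if ε ≤ 1 / 3 then 1 / 2 - (1 / 2) * Real.sqrt ((1 - 3 * ε) / (1 + ε)) else 1 / 2

theorem stmt2 : ∀ ε ∈ Set.Ioo (0 : ℝ) (1 / 2), ε < epsPrime ε ∧ epsPrime ε ≤ 1 / 2 := by
  rintro ε ⟨h0, h2⟩
  unfold epsPrime
  by_cases h : ε ≤ 1 / 3
  · simp only [if_pos h]
    have hnum : (0:ℝ) ≤ 1 - 3 * ε := by linarith
    have hden : (0:ℝ) < 1 + ε := by linarith
    have hx : (0:ℝ) ≤ (1 - 3 * ε) / (1 + ε) := div_nonneg hnum hden.le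
    have hs0 : 0 ≤ Real.sqrt ((1 - 3 * ε) / (1 + ε)) := Real.sqrt_nonneg _
    constructor
    · have hlt : (1 - 3 * ε) / (1 + ε) < (1 - 2 * ε) ^ 2 := by
        rw [div_lt_iff₀ hden]
        nlinarith [mul_pos (mul_pos h0 h0) h0]
      have := Real.sqrt_lt_sqrt hx hlt
      rw [Real.sqrt_sq (by linarith)] at this
      linarith
    · linarith
  · simp only [if_neg h]
    exact ⟨h2, le_refl _⟩
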